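/- Let $\mathcal{H}$ be a real Hilbert space, $\{u^n\}_{n=0}^N \subset \mathcal{H}$, $\Delta t = T/N$ with $T>0$, and $\partial u^n = (u^n-u^{n-1})/\Delta t$. Let $\{\lambda_i^{DQ}\}$ be the POD eigenvalues in $\mathcal{H}$ of the combined snapshot set $\{u^0,\dots,u^N,\partial u^1,\dots,\partial u^N\}$ with weight $(2N+1)^{-1}$, $s$ the number of positive eigenvalues, and $P_r$ the $\mathcal{H}$-orthogonal projection onto the span of the first $r$ modes. Then $\max_{0\le k\le N}\|u^k - P_r u^k\|_{\mathcal{H}}^2 \le 6\max\{1,T^2\}\sum_{i=r+1}^s \lambda_i^{DQ}$. -/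

import Mathlib

private lemma tele_aux {H : Type*} [AddCommGroup H] (f : ℕ → H) (m : ℕ) :
    ∀ k, m ≤ k → ∑ n ∈ Finset.Icc (m + 1) k, (f n - f (n - 1)) = f k - f m := by
  intro k hk
  induction k, hk using Nat.le_induction with
  | base => simp
  | succ k hk ih =>
      rw [Finset.sum_Icc_succ_top (by omega), ih]
      simp only [Nat.add_sub_cancel]
      abel

private lemma diff_bound {H : Type*} [NormedAddCommGroup H] (f : ℕ → H) (N : ℕ) :
    ∀ m k, m ≤ N → k ≤ N →
      ‖f k - f m‖ ≤ ∑ n ∈ Finset.Icc 1 N, ‖f n - f (n - 1)‖ := by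
  intro m k hm hk
  rcases le_total m k with h | h
  · rw [← tele_aux f m k h]
    calc ‖∑ n ∈ Finset.Icc (m + 1) k, (f n - f (n - 1))‖
        ≤ ∑ n ∈ Finset.Icc (m + 1) k, ‖f n - f (n - 1)‖ := norm_sum_le _ _
      _ ≤ ∑ n ∈ Finset.Icc 1 N, ‖f n - f (n - 1)‖ := by
          apply Finset.sum_le_sum_of_subset_of_nonneg
          · intro x hx
            simp only [Finset.mem_Icc] at hx ⊢
            omega
          · intros; positivity
  · rw [← norm_neg, neg_sub, ← tele_aux f k m h]
    calc ‖∑ n ∈ Finset.Icc (k + 1) m, (f n - f (n - 1))‖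
        ≤ ∑ n ∈ Finset.Icc (k + 1) m, ‖f n - f (n - 1)‖ := norm_sum_le _ _
      _ ≤ ∑ n ∈ Finset.Icc 1 N, ‖f n - f (n - 1)‖ := by
          apply Finset.sum_le_sum_of_subset_of_nonneg
          · intro x hx
            simp only [Finset.mem_Icc] at hx ⊢
            omega
          · intros; positivity

/-- Theorem 3.1, eq. (3.18a): the DQ POD basis satisfies the uniform pointwise projection
error bound in the norm of the POD Hilbert space. -/
theorem stmt_11 {H : Type*} [NormedAddCommGroup H] [InnerProductSpace ℝ H]
    (T : ℝ) (hT : 0 < T) (N : ℕ) (hN : 1 ≤ N) (Δt : ℝ) (hΔt : Δt = T / N)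
    (u du : ℕ → H)
    (hdu : ∀ n, 1 ≤ n → n ≤ N → du n = (Δt)⁻¹ • (u n - u (n - 1)))
    (s r : ℕ) (lam : ℕ → ℝ) (Pr : H →ₗ[ℝ] H)
    (hPOD : (1 / (2 * (N : ℝ) + 1)) *
        ((∑ n ∈ Finset.range (N + 1), ‖u n - Pr (u n)‖ ^ 2)
          + ∑ n ∈ Finset.Icc 1 N, ‖du n - Pr (du n)‖ ^ 2)
      = ∑ i ∈ Finset.Icc (r + 1) s, lam i) :
    ∀ k ≤ N, ‖u k - Pr (u k)‖ ^ 2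
      ≤ 6 * max 1 (T ^ 2) * ∑ i ∈ Finset.Icc (r + 1) s, lam i := by
  intro k hk
  have hn1 : (1 : ℝ) ≤ (N : ℝ) := by exact_mod_cast hN
  have hnpos : (0 : ℝ) < (N : ℝ) := lt_of_lt_of_le one_pos hn1
  have hΔpos : 0 < Δt := by rw [hΔt]; positivity
  set e : ℕ → H := fun n => u n - Pr (u n) with he
  set de : ℕ → H := fun n => du n - Pr (du n) with hde
  set A : ℝ := ∑ n ∈ Finset.range (N + 1), ‖e n‖ ^ 2 with hA
  set B : ℝ := ∑ n ∈ Finset.Icc 1 N, ‖de n‖ ^ 2 with hB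
  set Λ : ℝ := ∑ i ∈ Finset.Icc (r + 1) s, lam i with hΛ
  have h2N : (0 : ℝ) < 2 * (N : ℝ) + 1 := by linarith
  have hAB : A + B = (2 * (N : ℝ) + 1) * Λ := by
    have := hPOD
    field_simp at this
    linarith [this]
  have hA0 : 0 ≤ A := Finset.sum_nonneg fun _ _ => by positivity
  have hB0 : 0 ≤ B := Finset.sum_nonneg fun _ _ => by positivity
  clear_value Λ
  -- key: Δt • de n = e n - e (n-1)
  have hstep : ∀ n, 1 ≤ n → n ≤ N → e n - e (n - 1) = Δt • de n := by
    intro n h1 h2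
    have hdu' := hdu n h1 h2
    have : Δt • du n = u n - u (n - 1) := by
      rw [hdu', smul_smul, mul_inv_cancel₀ (ne_of_gt hΔpos), one_smul]
    have hP : Δt • Pr (du n) = Pr (u n) - Pr (u (n - 1)) := by
      rw [← map_smul, this, map_sub]
    show (u n - Pr (u n)) - (u (n - 1) - Pr (u (n - 1))) = Δt • (du n - Pr (du n))
    rw [smul_sub, this, hP]
    abel
  -- pick minimizing m
  obtain ⟨m, hmmem, hmmin⟩ := Finset.exists_min_image (Finset.range (N + 1))
    (fun n => ‖e n‖) ⟨0, by simp⟩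
  have hmN : m ≤ N := by simpa [Nat.lt_succ_iff] using Finset.mem_range.mp hmmem
  have hmA : ((N : ℝ) + 1) * ‖e m‖ ^ 2 ≤ A := by
    have : ∑ _n ∈ Finset.range (N + 1), ‖e m‖ ^ 2 ≤ A := by
      apply Finset.sum_le_sum
      intro i hi
      have := hmmin i hi
      have h0 : (0:ℝ) ≤ ‖e m‖ := norm_nonneg _
      nlinarith
    rw [hA]
    simpa [Finset.sum_const, Finset.card_range, add_comm, mul_comm] using this
  set C : ℝ := ∑ n ∈ Finset.Icc 1 N, ‖de n‖ with hC
  have hC0 : 0 ≤ C := Finset.sum_nonneg fun _ _ => norm_nonneg _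
  have hCS : C ^ 2 ≤ (N : ℝ) * B := by
    have := sq_sum_le_card_mul_sum_sq (s := Finset.Icc 1 N) (f := fun n => ‖de n‖)
    rw [hC, hB]
    simpa [Nat.card_Icc] using this
  have hdiff : ‖e k - e m‖ ≤ Δt * C := by
    calc ‖e k - e m‖ ≤ ∑ n ∈ Finset.Icc 1 N, ‖e n - e (n - 1)‖ :=
          diff_bound e N m k hmN hk
      _ = Δt * C := by
          rw [hC, Finset.mul_sum]
          apply Finset.sum_congr rfl
          intro n hn
          rw [Finset.mem_Icc] at hn
          rw [hstep n hn.1 hn.2, norm_smul, Real.norm_eq_abs,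
            abs_of_pos hΔpos]
  have hek : ‖e k‖ ≤ ‖e m‖ + Δt * C := by
    calc ‖e k‖ = ‖e m + (e k - e m)‖ := by congr 1; abel
      _ ≤ ‖e m‖ + ‖e k - e m‖ := norm_add_le _ _
      _ ≤ ‖e m‖ + Δt * C := by linarith
  rw [show u k - Pr (u k) = e k from rfl]
  set M : ℝ := max 1 (T ^ 2) with hM
  clear_value A B
  have hM1 : (1 : ℝ) ≤ M := le_max_left _ _
  have hMT : T ^ 2 ≤ M := le_max_right _ _
  have hTn : Δt * (N : ℝ) = T := by rw [hΔt]; field_simp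
  clear_value C M
  set a : ℝ := ‖e m‖ with haa
  set x : ℝ := ‖e k‖ with hxx
  have ha0 : 0 ≤ a := norm_nonneg _
  have hx0 : 0 ≤ x := norm_nonneg _
  clear_value a x
  clear hdiff hstep hmmin hmmem hPOD hdu haa hxx hA hB hC hΛ hM he hde hΔt
  clear e de u du Pr lam
  have h1 : x ^ 2 ≤ 2 * a ^ 2 + 2 * (Δt * C) ^ 2 := by
    nlinarith [sq_nonneg (a - Δt * C)]
  have h2 : (2 * (N : ℝ) + 1) * (2 * a ^ 2) ≤ 6 * A := by
    nlinarith [sq_nonneg a]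
  have hDC : (Δt * C) ^ 2 * (N : ℝ) ≤ T ^ 2 * B := by
    have h' := mul_le_mul_of_nonneg_left hCS (le_of_lt (mul_pos hΔpos hΔpos))
    have h'' := mul_le_mul_of_nonneg_right h' (le_of_lt hnpos)
    calc (Δt * C) ^ 2 * (N : ℝ) = Δt * Δt * C ^ 2 * (N : ℝ) := by ring
      _ ≤ Δt * Δt * ((N : ℝ) * B) * (N : ℝ) := h''
      _ = (Δt * (N : ℝ)) ^ 2 * B := by ring
      _ = T ^ 2 * B := by rw [hTn]
  have h3 : (2 * (N : ℝ) + 1) * (2 * (Δt * C) ^ 2) ≤ 6 * M * B := by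
    have s1 : (4 * (N : ℝ) + 2) * ((Δt * C) ^ 2 * (N : ℝ)) ≤ (4 * (N : ℝ) + 2) * (T ^ 2 * B) :=
      mul_le_mul_of_nonneg_left hDC (by linarith)
    have s2 : (4 * (N : ℝ) + 2) * (T ^ 2 * B) ≤ 6 * (N : ℝ) * (T ^ 2 * B) :=
      mul_le_mul_of_nonneg_right (by linarith) (by positivity)
    have s3 : 6 * (N : ℝ) * (T ^ 2 * B) ≤ 6 * (N : ℝ) * (M * B) :=
      mul_le_mul_of_nonneg_left (mul_le_mul_of_nonneg_right hMT hB0) (by positivity)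
    have hmain : (2 * (N : ℝ) + 1) * (2 * (Δt * C) ^ 2) * (N : ℝ) ≤ 6 * M * B * (N : ℝ) := by
      calc (2 * (N : ℝ) + 1) * (2 * (Δt * C) ^ 2) * (N : ℝ)
          = (4 * (N : ℝ) + 2) * ((Δt * C) ^ 2 * (N : ℝ)) := by ring
        _ ≤ 6 * (N : ℝ) * (M * B) := by linarith
        _ = 6 * M * B * (N : ℝ) := by ring
    exact le_of_mul_le_mul_right hmain hnpos
  have hfinal : (2 * (N : ℝ) + 1) * x ^ 2 ≤ (2 * (N : ℝ) + 1) * (6 * M * Λ) := by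
    have h6A : 6 * A ≤ 6 * M * A := by nlinarith
    calc (2 * (N : ℝ) + 1) * x ^ 2
        ≤ (2 * (N : ℝ) + 1) * (2 * a ^ 2) + (2 * (N : ℝ) + 1) * (2 * (Δt * C) ^ 2) := by
          have := mul_le_mul_of_nonneg_left h1 (le_of_lt h2N)
          linarith [this]
      _ ≤ 6 * A + 6 * M * B := by linarith
      _ ≤ 6 * M * (A + B) := by linarith
      _ = (2 * (N : ℝ) + 1) * (6 * M * Λ) := by rw [hAB]; ring
  have := le_of_mul_le_mul_left (by linarith [hfinal] : (2 * (N : ℝ) + 1) * x ^ 2 ≤ (2 * (N : ℝ) + 1) * (6 * M * Λ)) h2N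
  exact this
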